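/- arXiv:2105.08225 — 2 statements merged into one kernel-verified Lean document; each statement's English description precedes it below -/
import Mathlib

section
/- For integers l ≥ 2 and m ≥ 3, and every r with 1 ≤ r ≤ 3, the r-dynamic chromatic number of the lexicographic product P_l[K_{1,m}] of the path on l vertices with the star on m+1 vertices equals 4. -/
open SimpleGraph

/-- Lexicographic product of simple graphs. -/
def SimpleGraph.lexProd {α β : Type*} (G₁ : SimpleGraph α) (G₂ : SimpleGraph β) :
    SimpleGraph (α × β) where
  Adj x y := G₁.Adj x.1 y.1 ∨ (x.1 = y.1 ∧ G₂.Adj x.2 y.2)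
  symm := by
    constructor
    rintro x y (h | ⟨h1, h2⟩)
    · exact Or.inl h.symm
    · exact Or.inr ⟨h1.symm, h2.symm⟩
  loopless := by
    constructor
    rintro x (h | ⟨-, h⟩)
    · exact G₁.loopless.irrefl _ h
    · exact G₂.loopless.irrefl _ h

/-- `c` is a proper coloring such that each vertex `v` sees at least
`min r (deg v)` distinct colors among its neighbors. -/
def SimpleGraph.IsRDynamicColoring {α : Type*} (G : SimpleGraph α) (r : ℕ) (c : α → ℕ) : Prop :=
  (∀ u v, G.Adj u v → c u ≠ c v) ∧
  ∀ v, min r (G.neighborSet v).ncard ≤ (c '' G.neighborSet v).ncard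

/-- The `r`-dynamic chromatic number: least `k` such that there is an
`r`-dynamic coloring with colors in `{0, …, k-1}`. -/
noncomputable def SimpleGraph.rDynChromaticNumber {α : Type*} (G : SimpleGraph α) (r : ℕ) : ℕ :=
  sInf {k | ∃ c : α → ℕ, G.IsRDynamicColoring r c ∧ ∀ v, c v < k}

/-- Maximum degree (via `Set.ncard` of neighbor sets). -/
noncomputable def SimpleGraph.maxDeg {α : Type*} (G : SimpleGraph α) : ℕ :=
  sSup (Set.range fun v => (G.neighborSet v).ncard)

/-- Minimum degree (via `Set.ncard` of neighbor sets). -/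
noncomputable def SimpleGraph.minDeg {α : Type*} (G : SimpleGraph α) : ℕ :=
  sInf (Set.range fun v => (G.neighborSet v).ncard)

/-- The star `K_{1,m}`: center `0` adjacent to the `m` leaves. -/
def starGraph (m : ℕ) : SimpleGraph (Fin (m + 1)) :=
  SimpleGraph.fromRel (fun i _ => i = 0)

/-- The double star `K_{1,m,m}`: center `0`, middle vertices `1,…,m`,
outer leaf `i + m` attached to middle vertex `i`. -/
def doubleStarGraph (m : ℕ) : SimpleGraph (Fin (2 * m + 1)) :=
  SimpleGraph.fromRel (fun i j =>
    ((i : ℕ) = 0 ∧ 1 ≤ (j : ℕ) ∧ (j : ℕ) ≤ m) ∨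
    (1 ≤ (i : ℕ) ∧ (i : ℕ) ≤ m ∧ (j : ℕ) = (i : ℕ) + m))

/-- The triple star `K_{1,m,m,m}`: center `0`, middle vertices `1,…,m`,
vertex `i + m` attached to `i` for `1 ≤ i ≤ 2m`. -/
def tripleStarGraph (m : ℕ) : SimpleGraph (Fin (3 * m + 1)) :=
  SimpleGraph.fromRel (fun i j =>
    ((i : ℕ) = 0 ∧ 1 ≤ (j : ℕ) ∧ (j : ℕ) ≤ m) ∨
    (1 ≤ (i : ℕ) ∧ (i : ℕ) ≤ 2 * m ∧ (j : ℕ) = (i : ℕ) + m))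

theorem stmt_8 (l m r : ℕ) (hl : 2 ≤ l) (hm : 3 ≤ m) (hr1 : 1 ≤ r) (hr3 : r ≤ 3) :
    ((SimpleGraph.pathGraph l).lexProd (_root_.starGraph m)).rDynChromaticNumber r = 4 := by
  set G := (SimpleGraph.pathGraph l).lexProd (_root_.starGraph m) with hG
  set c : Fin l × Fin (m + 1) → ℕ :=
    fun p => 2 * (p.1.val % 2) + (if p.2 = 0 then 0 else 1) with hc
  have hone : ((⟨1, by omega⟩ : Fin (m + 1)) : Fin (m + 1)) ≠ 0 := by
    intro h
    have := congrArg Fin.val h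
    simp at this
  -- proper
  have hproper : ∀ u v, G.Adj u v → c u ≠ c v := by
    rintro u v (hadj | ⟨h1, h2⟩)
    · rw [SimpleGraph.pathGraph_adj] at hadj
      have hpar : u.1.val % 2 ≠ v.1.val % 2 := by omega
      simp only [hc]
      split <;> split <;> omega
    · rw [_root_.starGraph, SimpleGraph.fromRel_adj] at h2
      obtain ⟨hne, h0⟩ := h2
      simp only [hc, h1]
      rcases h0 with h0 | h0
      · rw [h0] at hne ⊢
        rw [if_pos rfl, if_neg (Ne.symm hne)]
        omega
      · rw [h0] at hne ⊢
        rw [if_pos rfl, if_neg hne]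
        omega
  -- dynamic: every vertex sees at least 3 colors
  have hdyn : ∀ v, min r (G.neighborSet v).ncard ≤ (c '' G.neighborSet v).ncard := by
    intro v
    obtain ⟨i, x⟩ := v
    -- choose a path-neighbor j of i
    set j : Fin l := if h : i.val = 0 then ⟨1, by omega⟩ else ⟨i.val - 1, by omega⟩ with hj
    have hadjij : (SimpleGraph.pathGraph l).Adj i j := by
      rw [SimpleGraph.pathGraph_adj]
      by_cases h : i.val = 0 <;> simp [hj, h] <;> omega
    have hpar : i.val % 2 ≠ j.val % 2 := by
      have : j.val + 1 = i.val ∨ i.val + 1 = j.val := by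
        by_cases h : i.val = 0 <;> simp [hj, h] <;> omega
      omega
    -- three neighbors with distinct colors
    set y : Fin l × Fin (m + 1) := (i, if x = 0 then ⟨1, by omega⟩ else 0) with hy
    have hyN : y ∈ G.neighborSet (i, x) := by
      show G.Adj (i, x) y
      refine Or.inr ⟨rfl, ?_⟩
      rw [_root_.starGraph, SimpleGraph.fromRel_adj]
      by_cases h : x = 0
      · subst h
        exact ⟨by simp [hy, Ne.symm hone], Or.inl rfl⟩
      · refine ⟨by simp [hy, h], ?_⟩
        right; simp [hy, h]
    have h0N : ((j, (0 : Fin (m + 1)))) ∈ G.neighborSet (i, x) := Or.inl hadjij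
    have h1N : ((j, (⟨1, by omega⟩ : Fin (m + 1)))) ∈ G.neighborSet (i, x) := Or.inl hadjij
    have hc0 : c (j, (0 : Fin (m + 1))) = 2 * (j.val % 2) := by simp [hc]
    have hc1 : c (j, (⟨1, by omega⟩ : Fin (m + 1))) = 2 * (j.val % 2) + 1 := by
      simp [hc, hone]
    have hcy : c y = 2 * (i.val % 2) ∨ c y = 2 * (i.val % 2) + 1 := by
      by_cases h : x = 0 <;> simp [hc, hy, h, hone]
    have hsub : ({c y, 2 * (j.val % 2), 2 * (j.val % 2) + 1} : Set ℕ)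
        ⊆ c '' G.neighborSet (i, x) := by
      rintro z (rfl | rfl | rfl)
      · exact ⟨y, hyN, rfl⟩
      · exact ⟨_, h0N, hc0⟩
      · exact ⟨_, h1N, hc1⟩
    have h3 : ({c y, 2 * (j.val % 2), 2 * (j.val % 2) + 1} : Set ℕ).ncard = 3 := by
      rw [Set.ncard_insert_of_notMem (by rcases hcy with h | h <;> simp [h] <;> omega),
        Set.ncard_insert_of_notMem (by simp), Set.ncard_singleton]
    calc min r (G.neighborSet (i, x)).ncard ≤ r := min_le_left _ _
      _ ≤ 3 := hr3
      _ = ({c y, 2 * (j.val % 2), 2 * (j.val % 2) + 1} : Set ℕ).ncard := h3.symm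
      _ ≤ (c '' G.neighborSet (i, x)).ncard := Set.ncard_le_ncard hsub (Set.toFinite _)
  have h4mem : 4 ∈ {k | ∃ c : Fin l × Fin (m + 1) → ℕ,
      G.IsRDynamicColoring r c ∧ ∀ v, c v < 4} := by
    refine ⟨c, ⟨hproper, hdyn⟩, ?_⟩
    intro v
    simp only [hc]
    have := Nat.mod_lt v.1.val (show 0 < 2 by omega)
    split <;> omega
  have hlow : ∀ k ∈ {k | ∃ c : Fin l × Fin (m + 1) → ℕ,
      G.IsRDynamicColoring r c ∧ ∀ v, c v < k}, 4 ≤ k := by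
    rintro k ⟨d, ⟨hp, _⟩, hlt⟩
    set p0 : Fin l := ⟨0, by omega⟩
    set p1 : Fin l := ⟨1, by omega⟩
    set s0 : Fin (m + 1) := ⟨0, by omega⟩
    set s1 : Fin (m + 1) := ⟨1, by omega⟩
    have hpadj : (SimpleGraph.pathGraph l).Adj p0 p1 := by
      rw [SimpleGraph.pathGraph_adj]; left; rfl
    have hsadj : (_root_.starGraph m).Adj s0 s1 := by
      rw [_root_.starGraph, SimpleGraph.fromRel_adj]
      constructor
      · intro h; exact absurd (congrArg Fin.val h) (by simp)
      · left; rfl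
    have h1 : d (p0, s0) ≠ d (p0, s1) := hp _ _ (Or.inr ⟨rfl, hsadj⟩)
    have h2 : d (p0, s0) ≠ d (p1, s0) := hp _ _ (Or.inl hpadj)
    have h3 : d (p0, s0) ≠ d (p1, s1) := hp _ _ (Or.inl hpadj)
    have h4 : d (p0, s1) ≠ d (p1, s0) := hp _ _ (Or.inl hpadj)
    have h5 : d (p0, s1) ≠ d (p1, s1) := hp _ _ (Or.inl hpadj)
    have h6 : d (p1, s0) ≠ d (p1, s1) := hp _ _ (Or.inr ⟨rfl, hsadj⟩)
    have l1 := hlt (p0, s0)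
    have l2 := hlt (p0, s1)
    have l3 := hlt (p1, s0)
    have l4 := hlt (p1, s1)
    omega
  refine le_antisymm (Nat.sInf_le h4mem) (le_csInf ⟨4, h4mem⟩ hlow)
end

section
/- For l = 2 and m ≥ 3, if δ ≤ r ≤ Δ where δ and Δ are the minimum and maximum degree of P_2[K_{1,m}], then χ_r(P_2[K_{1,m}]) = 2(m+1). -/
open SimpleGraph

section Aux

variable {m : ℕ}

abbrev GG (m : ℕ) : SimpleGraph (Fin 2 × Fin (m+1)) :=
  (SimpleGraph.pathGraph 2).lexProd (starGraph m)


lemma lexAdj (x y : Fin 2 × Fin (m+1)) :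
    (GG m).Adj x y ↔ x.1 ≠ y.1 ∨ (x.1 = y.1 ∧ x.2 ≠ y.2 ∧ (x.2 = 0 ∨ y.2 = 0)) := by
  have hp : ∀ a b : Fin 2, (SimpleGraph.pathGraph 2).Adj a b ↔ a ≠ b := by
    rw [pathGraph_two_eq_top]; simp
  have hs : ∀ i j : Fin (m+1), (_root_.starGraph m).Adj i j ↔ i ≠ j ∧ (i = 0 ∨ j = 0) := by
    intro i j
    constructor
    · rintro ⟨hne, h | h⟩
      · exact ⟨hne, Or.inl h⟩
      · exact ⟨hne, Or.inr h⟩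
    · rintro ⟨hne, h | h⟩
      · exact ⟨hne, Or.inl h⟩
      · exact ⟨hne, Or.inr h⟩
  change (SimpleGraph.pathGraph 2).Adj x.1 y.1 ∨ _ ↔ _
  rw [hp, hs]

/-- template neighbor-superset -/
def Tset (b : Fin 2) (j : Fin (m+1)) : Set (Fin 2 × Fin (m+1)) :=
  (Prod.mk (b+1) '' Set.univ) ∪ {(b, j)}

lemma Tset_ncard (b : Fin 2) (j : Fin (m+1)) : (Tset b j).ncard = m + 2 := by
  have hb : b + 1 ≠ b := by revert b; decide
  have hinj : Function.Injective (Prod.mk (b+1) : Fin (m+1) → Fin 2 × Fin (m+1)) := by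
    intro x y h; simpa using h
  have hdisj : Disjoint (Prod.mk (b+1) '' (Set.univ : Set (Fin (m+1)))) {(b, j)} := by
    rw [Set.disjoint_singleton_right]
    rintro ⟨y, -, hy⟩
    exact hb (congrArg Prod.fst hy)
  rw [Tset, Set.ncard_union_eq hdisj (Set.toFinite _) (Set.toFinite _),
    Set.ncard_image_of_injective _ hinj, Set.ncard_univ, Set.ncard_singleton]
  simp

lemma Tset_subset_nbhd (v : Fin 2 × Fin (m+1)) (j : Fin (m+1)) (hj : v.2 ≠ j)
    (hj0 : v.2 = 0 ∨ j = 0) : Tset v.1 j ⊆ (GG m).neighborSet v := by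
  have hb : ∀ a : Fin 2, a + 1 ≠ a := by decide
  rintro x (⟨y, -, rfl⟩ | rfl)
  · rw [SimpleGraph.mem_neighborSet, lexAdj]
    exact Or.inl (hb v.1).symm
  · rw [SimpleGraph.mem_neighborSet, lexAdj]
    exact Or.inr ⟨rfl, hj, hj0⟩

lemma exists_good_j (v : Fin 2 × Fin (m+1)) (hm : 3 ≤ m) :
    ∃ j : Fin (m+1), v.2 ≠ j ∧ (v.2 = 0 ∨ j = 0) := by
  by_cases h : v.2 = 0
  · refine ⟨⟨1, by omega⟩, ?_, Or.inl h⟩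
    rw [h]; intro hc
    exact absurd (congrArg Fin.val hc) (by simp)
  · exact ⟨0, h, Or.inr rfl⟩

lemma deg_ge (hm : 3 ≤ m) (v : Fin 2 × Fin (m+1)) : m + 2 ≤ ((GG m).neighborSet v).ncard := by
  obtain ⟨j, hj, hj0⟩ := exists_good_j v hm
  calc m + 2 = (Tset v.1 j).ncard := (Tset_ncard _ _).symm
    _ ≤ ((GG m).neighborSet v).ncard :=
      Set.ncard_le_ncard (Tset_subset_nbhd v j hj hj0) (Set.toFinite _)

lemma leaf_nbhd (b : Fin 2) (k : Fin (m+1)) (hk : k ≠ 0) :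
    (GG m).neighborSet (b, k) = Tset b 0 := by
  apply Set.Subset.antisymm
  · intro x hx
    rw [SimpleGraph.mem_neighborSet, lexAdj] at hx
    rcases hx with h | ⟨h1, h2, h3⟩
    · left
      refine ⟨x.2, trivial, ?_⟩
      have h2 : ∀ a b : Fin 2, b ≠ a → a = b + 1 := by decide
      have : x.1 = b + 1 := h2 _ _ h
      rw [← this]
    · right
      rcases h3 with h3 | h3
      · exact absurd h3 hk
      · rcases x with ⟨a, y⟩
        simp only at h1 h3
        rw [h3] at *
        simp [← h1]
  · exact Tset_subset_nbhd (b, k) 0 hk (Or.inr rfl)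

lemma injOn_of_ncard_image {α β : Type*} {f : α → β} {s : Set α} (hs : s.Finite)
    (h : s.ncard ≤ (f '' s).ncard) : Set.InjOn f s := by
  classical
  have h1 : f '' s = ↑(hs.toFinset.image f) := by
    simp [Finset.coe_image, Set.Finite.coe_toFinset]
  rw [Set.ncard_eq_toFinset_card _ hs, h1, Set.ncard_coe_finset] at h
  have : (hs.toFinset.image f).card = hs.toFinset.card :=
    le_antisymm Finset.card_image_le h
  have := Finset.injOn_of_card_image_eq this
  rwa [Set.Finite.coe_toFinset] at this

end Aux

theorem stmt_9 (m r : ℕ) (hm : 3 ≤ m)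
    (hδ : ((SimpleGraph.pathGraph 2).lexProd (_root_.starGraph m)).minDeg ≤ r)
    (hΔ : r ≤ ((SimpleGraph.pathGraph 2).lexProd (_root_.starGraph m)).maxDeg) :
    ((SimpleGraph.pathGraph 2).lexProd (_root_.starGraph m)).rDynChromaticNumber r = 2 * (m + 1) := by
  clear hΔ
  have hr : m + 2 ≤ r := by
    refine le_trans ?_ hδ
    refine le_csInf ⟨_, Set.mem_range.2 ⟨((0 : Fin 2), (0 : Fin (m+1))), rfl⟩⟩ ?_
    rintro d ⟨v, rfl⟩
    exact deg_ge hm v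
  have h11 : ∀ a : Fin 2, a + 1 + 1 = a := by decide
  -- the rainbow coloring
  have hcinj : Function.Injective
      (fun v : Fin 2 × Fin (m+1) => v.1.val * (m + 1) + v.2.val) := by
    rintro ⟨a, i⟩ ⟨b, j⟩ h
    simp only at h
    have ha := a.isLt; have hb := b.isLt; have hi := i.isLt; have hj := j.isLt
    have ha' : a.val = 0 ∨ a.val = 1 := by omega
    have hb' : b.val = 0 ∨ b.val = 1 := by omega
    have : a.val = b.val ∧ i.val = j.val := by
      rcases ha' with h1 | h1 <;> rcases hb' with h2 | h2 <;> rw [h1, h2] at h <;> omega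
    exact Prod.ext (Fin.ext this.1) (Fin.ext this.2)
  have hmem : 2 * (m + 1) ∈ {k | ∃ c : (Fin 2 × Fin (m+1)) → ℕ,
      (GG m).IsRDynamicColoring r c ∧ ∀ v, c v < k} := by
    refine ⟨fun v => v.1.val * (m + 1) + v.2.val, ⟨?_, ?_⟩, ?_⟩
    · intro u v hadj h
      exact (GG m).ne_of_adj hadj (hcinj h)
    · intro v
      rw [Set.ncard_image_of_injective _ hcinj]
      exact min_le_right _ _
    · rintro ⟨a, i⟩
      have ha := a.isLt; have hi := i.isLt
      have ha' : a.val = 0 ∨ a.val = 1 := by omega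
      simp only
      rcases ha' with h1 | h1 <;> rw [h1] <;> omega
  have hlb : ∀ k ∈ {k | ∃ c : (Fin 2 × Fin (m+1)) → ℕ,
      (GG m).IsRDynamicColoring r c ∧ ∀ v, c v < k}, 2 * (m + 1) ≤ k := by
    rintro k ⟨c, ⟨hprop, hdyn⟩, hbd⟩
    have hinj : Function.Injective c := by
      intro u v huv
      by_contra hne
      by_cases hadj : (GG m).Adj u v
      · exact hprop u v hadj huv
      · rw [lexAdj] at hadj
        push_neg at hadj
        obtain ⟨h1, h2⟩ := hadj
        have h1' : u.1 = v.1 := h1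
        have h2' : u.2 ≠ v.2 := by
          intro h; exact hne (Prod.ext h1' h)
        have h3 := h2 h1' h2'
        obtain ⟨hu0, hv0⟩ := h3
        set one : Fin (m+1) := ⟨1, by omega⟩ with hone
        have hone0 : one ≠ 0 := by
          intro hc; exact absurd (congrArg Fin.val hc) (by simp [hone])
        set w : Fin 2 × Fin (m+1) := (u.1 + 1, one) with hw
        have hN : (GG m).neighborSet w = Tset (u.1 + 1) 0 := leaf_nbhd _ _ hone0
        have hNc : ((GG m).neighborSet w).ncard = m + 2 := by
          rw [hN, Tset_ncard]
        have hd := hdyn w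
        rw [hNc, min_eq_right hr] at hd
        have hio : Set.InjOn c ((GG m).neighborSet w) :=
          injOn_of_ncard_image (Set.toFinite _) (by rw [hNc]; exact hd)
        have hu : u ∈ (GG m).neighborSet w := by
          rw [hN]
          left
          exact ⟨u.2, trivial, by rw [h11]⟩
        have hv : v ∈ (GG m).neighborSet w := by
          rw [hN]
          left
          exact ⟨v.2, trivial, by rw [h11, h1']⟩
        exact hne (hio hu hv huv)
    have hfin : Function.Injective (fun v : Fin 2 × Fin (m+1) => (⟨c v, hbd v⟩ : Fin k)) := by
      intro u v h
      exact hinj (congrArg Fin.val h)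
    have := Fintype.card_le_of_injective _ hfin
    simpa using this
  exact le_antisymm (Nat.sInf_le hmem) (le_csInf ⟨_, hmem⟩ hlb)
end
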